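/- Let φ : [0,∞) → [0,∞) be measurable with Λ := ∫₀^∞ φ(s) ds ∈ (0,∞), and suppose that for some q ≥ 1 one has ∫₀^∞ s^q·φ(s) ds < ∞. Then there exists a constant C > 0 (depending only on φ and q) such that for every integer n ≥ 1 and every real r ≥ 1: ∫_r^∞ √s·φ^{*n}(s) ds ≤ C·Λⁿ·n^q·r^{1/2−q}. -/

import Mathlib

open MeasureTheory
open scoped ENNReal

noncomputable section

/-- Convolution powers of `φ`: `φ^{*1} = φ`, `φ^{*(n+1)}(t) = ∫₀^t φ^{*n}(t−s)·φ(s) ds`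
(`convPow φ 0` is junk, never used). -/
def convPow (φ : ℝ → ℝ) : ℕ → ℝ → ℝ
  | 0 => fun _ => 0
  | 1 => φ
  | n + 2 => fun t => ∫ s in (0 : ℝ)..t, convPow φ (n + 1) (t - s) * φ s

namespace Stmt12Aux

lemma two_weight_rpow {q : ℝ} (hq : 1 ≤ q) {w₁ w₂ : ℝ≥0∞} (hw : w₁ + w₂ = 1)
    (h10 : w₁ ≠ 0) (h20 : w₂ ≠ 0) (a b : ℝ≥0∞) :
    (a + b) ^ q ≤ w₁ ^ (1 - q) * a ^ q + w₂ ^ (1 - q) * b ^ q := by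
  have h1t : w₁ ≠ ⊤ := by
    intro h; rw [h] at hw; simp at hw
  have h2t : w₂ ≠ ⊤ := by
    intro h; rw [h] at hw; simp at hw
  have key := ENNReal.rpow_arith_mean_le_arith_mean2_rpow w₁ w₂ (a / w₁) (b / w₂) hw hq
  rw [ENNReal.mul_div_cancel h10 h1t, ENNReal.mul_div_cancel h20 h2t] at key
  refine key.trans (le_of_eq ?_)
  have hq0 : (0:ℝ) ≤ q := le_trans zero_le_one hq
  rw [ENNReal.div_rpow_of_nonneg _ _ hq0, ENNReal.div_rpow_of_nonneg _ _ hq0,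
    ENNReal.rpow_sub 1 q h10 h1t, ENNReal.rpow_sub 1 q h20 h2t,
    ENNReal.rpow_one, ENNReal.rpow_one]
  simp only [div_eq_mul_inv]
  ring_nf

lemma combine {q : ℝ} (hq : 1 ≤ q) (N : ℝ≥0∞) (hN0 : N ≠ 0) (hNt : N ≠ ⊤) :
    (N / (N + 1)) ^ (1 - q) * N ^ q + ((1 : ℝ≥0∞) / (N + 1)) ^ (1 - q) = (N + 1) ^ q := by
  have hM0 : N + 1 ≠ 0 := by simp
  have hMt : N + 1 ≠ ⊤ := ENNReal.add_ne_top.2 ⟨hNt, ENNReal.one_ne_top⟩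
  have hMq : (N + 1) ^ (1 - q) = ((N + 1) ^ (q - 1))⁻¹ := by
    rw [show (1 - q) = -(q - 1) by ring, ENNReal.rpow_neg]
  have e2 : ((1 : ℝ≥0∞) / (N + 1)) ^ (1 - q) = (N + 1) ^ (q - 1) := by
    rw [one_div, ENNReal.inv_rpow, hMq, inv_inv]
  have e1 : (N / (N + 1)) ^ (1 - q) * N ^ q = (N + 1) ^ (q - 1) * N := by
    rw [div_eq_mul_inv, ENNReal.mul_rpow_of_ne_top hNt (ENNReal.inv_ne_top.2 hM0),
      ENNReal.inv_rpow, hMq, inv_inv]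
    rw [mul_comm (N ^ (1 - q)), mul_assoc, ← ENNReal.rpow_add _ _ hN0 hNt]
    norm_num
  rw [e1, e2, ← mul_add_one]
  calc (N + 1) ^ (q - 1) * (N + 1) = (N + 1) ^ (q - 1) * (N + 1) ^ (1 : ℝ) := by
        rw [ENNReal.rpow_one]
    _ = (N + 1) ^ q := by rw [← ENNReal.rpow_add _ _ hM0 hMt]; norm_num

lemma lint_Ioi {h : ℝ → ℝ≥0∞} (h0 : ∀ s < 0, h s = 0) :
    ∫⁻ s, h s = ∫⁻ s in Set.Ioi 0, h s := by
  rw [← lintegral_indicator measurableSet_Ioi]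
  refine lintegral_congr_ae ?_
  have hsub : {x : ℝ | ¬ h x = Set.indicator (Set.Ioi 0) h x} ⊆ {0} := by
    intro x hx
    simp only [Set.mem_setOf_eq] at hx
    by_contra hx0
    rcases lt_or_gt_of_ne (fun h' => hx0 h') with hlt | hgt
    · exact hx (by rw [h0 x hlt, Set.indicator_of_notMem (by simpa using hlt.le)])
    · exact hx (by rw [Set.indicator_of_mem (by simpa using hgt)])
  exact (measure_mono_null hsub (measure_singleton 0))

lemma main_induction (φ : ℝ → ℝ) (q : ℝ) (hq : 1 ≤ q)
    (hmeas : Measurable φ) (hnonneg : ∀ s, 0 ≤ φ s) (hzero : ∀ s < (0:ℝ), φ s = 0)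
    (A B : ℝ≥0∞) (hA : A = ∫⁻ s, ENNReal.ofReal (φ s)) (hAt : A ≠ ⊤)
    (hB : B = ∫⁻ s, (ENNReal.ofReal s) ^ q * ENNReal.ofReal (φ s)) :
    ∀ n : ℕ, Measurable (convPow φ (n+1)) ∧ (∀ s, 0 ≤ convPow φ (n+1) s) ∧
      (∀ s < 0, convPow φ (n+1) s = 0) ∧
      (∫⁻ s, ENNReal.ofReal (convPow φ (n+1) s)) = A ^ (n+1) ∧
      (∫⁻ s, (ENNReal.ofReal s) ^ q * ENNReal.ofReal (convPow φ (n+1) s)) ≤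
        ((n : ℝ≥0∞) + 1) ^ q * A ^ n * B := by
  have hq0 : (0:ℝ) ≤ q := le_trans zero_le_one hq
  intro n
  induction n with
  | zero =>
    refine ⟨hmeas, hnonneg, hzero, by rw [pow_one, hA]; rfl, ?_⟩
    simp only [Nat.cast_zero, zero_add, ENNReal.one_rpow, pow_zero, one_mul]
    rw [hB]; exact le_of_eq rfl
  | succ n IH =>
    obtain ⟨hgm, hg0, hgz, hgA, hgB⟩ := IH
    set g := convPow φ (n+1) with hgdef
    set og : ℝ → ℝ≥0∞ := fun s => ENNReal.ofReal (g s) with hogdef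
    set oφ : ℝ → ℝ≥0∞ := fun s => ENNReal.ofReal (φ s) with hoφdef
    set w : ℝ → ℝ≥0∞ := fun t => (ENNReal.ofReal t) ^ q with hwdef
    set F : ℝ → ℝ≥0∞ := fun t => ∫⁻ s, og (t - s) * oφ s with hFdef
    -- joint measurability of the kernel
    have hker : Measurable (fun p : ℝ × ℝ => og (p.1 - p.2) * oφ p.2) :=
      ((ENNReal.measurable_ofReal.comp (hgm.comp (measurable_fst.sub measurable_snd))).mul
        (ENNReal.measurable_ofReal.comp (hmeas.comp measurable_snd)))
    have hFmeas : Measurable F := Measurable.lintegral_prod_right' hker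
    -- pointwise identity : convPow φ (n+2) t = (F t).toReal
    have hpt : ∀ t : ℝ, convPow φ (n+2) t = (F t).toReal := by
      intro t
      rcases le_or_gt t 0 with ht | ht
      · -- t ≤ 0 : both sides vanish
        have h1 : convPow φ (n+2) t = 0 := by
          show (∫ s in (0:ℝ)..t, g (t - s) * φ s) = 0
          rcases eq_or_lt_of_le ht with rfl | hlt
          · simp
          · have : (fun s => g (t - s) * φ s) = fun _ => 0 := funext fun s => by
              rcases lt_or_ge s 0 with h | h
              · rw [hzero s h, mul_zero]
              · rw [hgz _ (by linarith), zero_mul]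
            rw [this]; simp
        have h2 : F t = 0 := by
          rw [hFdef]
          have hae : (fun s => og (t - s) * oφ s) =ᵐ[volume] (fun _ => (0:ℝ≥0∞)) := by
            have hsub : {s : ℝ | ¬ og (t - s) * oφ s = 0} ⊆ {0} := by
              intro s hs
              simp only [Set.mem_setOf_eq] at hs
              by_contra hs0
              rcases lt_or_gt_of_ne (fun h' => hs0 h') with hlt | hgt
              · exact hs (by simp only [hoφdef, hzero s hlt]; simp)
              · exact hs (by
                  have : t - s < 0 := by linarith
                  simp only [hogdef, hgz _ this]; simp)
            exact measure_mono_null hsub (measure_singleton 0)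
          simp only []
          rw [lintegral_congr_ae hae, lintegral_zero]
        rw [h1, h2]; simp
      · -- t > 0
        have key : convPow φ (n+2) t = ∫ s, g (t - s) * φ s := by
          show (∫ s in (0:ℝ)..t, g (t - s) * φ s) = _
          rw [intervalIntegral.integral_of_le ht.le, ← integral_Icc_eq_integral_Ioc]
          exact setIntegral_eq_integral_of_forall_compl_eq_zero fun s hs => by
            simp only [Set.mem_Icc, not_and_or, not_le] at hs
            rcases hs with h | h
            · rw [hzero s h, mul_zero]
            · rw [hgz _ (by linarith), zero_mul]
        have hmeas2 : Measurable fun s => g (t - s) * φ s :=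
          (hgm.comp (measurable_const.sub measurable_id)).mul hmeas
        have hnn : 0 ≤ᵐ[volume] fun s => g (t - s) * φ s :=
          Filter.Eventually.of_forall fun s => mul_nonneg (hg0 _) (hnonneg s)
        rw [key, integral_eq_lintegral_of_nonneg_ae hnn hmeas2.aestronglyMeasurable]
        congr 1
        refine lintegral_congr fun s => ?_
        rw [ENNReal.ofReal_mul (hg0 _)]
    -- rest of the induction step
    have hwm : Measurable w := ENNReal.continuous_rpow_const.measurable.comp ENNReal.measurable_ofReal
    have hogm : Measurable og := ENNReal.measurable_ofReal.comp hgm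
    have hoφm : Measurable oφ := ENNReal.measurable_ofReal.comp hmeas
    have hcm : Measurable (convPow φ (n+2)) := by
      have : convPow φ (n+2) = fun t => (F t).toReal := funext hpt
      rw [this]; exact ENNReal.measurable_toReal.comp hFmeas
    have hc0 : ∀ s, 0 ≤ convPow φ (n+2) s := fun s => by rw [hpt s]; exact ENNReal.toReal_nonneg
    have hcz : ∀ t < 0, convPow φ (n+2) t = 0 := by
      intro t ht
      show (∫ s in (0:ℝ)..t, g (t - s) * φ s) = 0
      have : (fun s => g (t - s) * φ s) = fun _ => 0 := funext fun s => by
        rcases lt_or_ge s 0 with h | h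
        · rw [hzero s h, mul_zero]
        · rw [hgz _ (by linarith), zero_mul]
      rw [this]; simp
    have hFtot : ∫⁻ t, F t = A ^ (n+2) := by
      have swap : (∫⁻ t, ∫⁻ s, og (t - s) * oφ s) = ∫⁻ s, ∫⁻ t, og (t - s) * oφ s :=
        lintegral_lintegral_swap hker.aemeasurable
      calc ∫⁻ t, F t = ∫⁻ s, ∫⁻ t, og (t - s) * oφ s := swap
        _ = ∫⁻ s, (∫⁻ t, og (t - s)) * oφ s := by
            refine lintegral_congr fun s => ?_
            exact lintegral_mul_const _ (hogm.comp (measurable_id.sub measurable_const))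
        _ = ∫⁻ s, A ^ (n+1) * oφ s := by
            refine lintegral_congr fun s => ?_
            rw [lintegral_sub_right_eq_self og s, hgA]
        _ = A ^ (n+1) * A := by rw [lintegral_const_mul _ hoφm, ← hA]
        _ = A ^ (n+2) := by ring
    have hAfin : A ^ (n+2) ≠ ⊤ := ENNReal.pow_ne_top hAt
    have hFae : ∀ᵐ t : ℝ, ENNReal.ofReal (convPow φ (n+2) t) = F t := by
      filter_upwards [ae_lt_top hFmeas (by rw [hFtot]; exact hAfin)] with t ht
      rw [hpt t, ENNReal.ofReal_toReal ht.ne]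
    have hlint : ∫⁻ t, ENNReal.ofReal (convPow φ (n+2) t) = A ^ (n+2) := by
      rw [lintegral_congr_ae hFae, hFtot]
    refine ⟨hcm, hc0, hcz, hlint, ?_⟩
    -- the moment bound
    set N : ℝ≥0∞ := (n : ℝ≥0∞) + 1 with hNdef
    have hN0 : N ≠ 0 := by simp [hNdef]
    have hNt : N ≠ ⊤ := ENNReal.add_ne_top.2 ⟨ENNReal.natCast_ne_top n, ENNReal.one_ne_top⟩
    have hM0 : N + 1 ≠ 0 := by simp
    have hMt : N + 1 ≠ ⊤ := ENNReal.add_ne_top.2 ⟨hNt, ENNReal.one_ne_top⟩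
    set c₁ : ℝ≥0∞ := (N / (N + 1)) ^ (1 - q) with hc₁
    set c₂ : ℝ≥0∞ := ((1 : ℝ≥0∞) / (N + 1)) ^ (1 - q) with hc₂
    have hw1 : N / (N + 1) ≠ 0 := by
      rw [Ne, ENNReal.div_eq_zero_iff]; push_neg; exact ⟨hN0, hMt⟩
    have hw2 : (1 : ℝ≥0∞) / (N + 1) ≠ 0 := by
      rw [Ne, ENNReal.div_eq_zero_iff]; push_neg; exact ⟨one_ne_zero, hMt⟩
    have hsum : N / (N + 1) + 1 / (N + 1) = 1 := by
      rw [ENNReal.div_add_div_same, ENNReal.div_self hM0 hMt]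
    have hpw : ∀ u s : ℝ, w (u + s) ≤ c₁ * w u + c₂ * w s := by
      intro u s
      calc w (u + s) = (ENNReal.ofReal (u + s)) ^ q := rfl
        _ ≤ (ENNReal.ofReal u + ENNReal.ofReal s) ^ q :=
            ENNReal.rpow_le_rpow ENNReal.ofReal_add_le hq0
        _ ≤ c₁ * (ENNReal.ofReal u) ^ q + c₂ * (ENNReal.ofReal s) ^ q :=
            two_weight_rpow hq hsum hw1 hw2 _ _
    set In : ℝ≥0∞ := ∫⁻ u, w u * og u with hIn
    have hker2 : Measurable (fun p : ℝ × ℝ => w p.1 * (og (p.1 - p.2) * oφ p.2)) :=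
      (hwm.comp measurable_fst).mul hker
    calc ∫⁻ t, (ENNReal.ofReal t) ^ q * ENNReal.ofReal (convPow φ (n+2) t)
        = ∫⁻ t, w t * F t :=
          lintegral_congr_ae (hFae.mono fun t ht => by dsimp only; rw [ht])
      _ = ∫⁻ t, ∫⁻ s, w t * (og (t - s) * oφ s) :=
          lintegral_congr fun t => (lintegral_const_mul (w t)
            ((hogm.comp (measurable_const.sub measurable_id)).mul hoφm)).symm
      _ = ∫⁻ s, ∫⁻ t, w t * (og (t - s) * oφ s) :=
          lintegral_lintegral_swap hker2.aemeasurable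
      _ = ∫⁻ s, (∫⁻ t, w t * og (t - s)) * oφ s := by
          refine lintegral_congr fun s => ?_
          calc ∫⁻ t, w t * (og (t - s) * oφ s)
              = ∫⁻ t, (w t * og (t - s)) * oφ s := by
                refine lintegral_congr fun t => ?_; ring
            _ = (∫⁻ t, w t * og (t - s)) * oφ s :=
                lintegral_mul_const _ (hwm.mul (hogm.comp (measurable_id.sub measurable_const)))
      _ = ∫⁻ s, (∫⁻ u, w (u + s) * og u) * oφ s := by
          refine lintegral_congr fun s => ?_
          congr 1
          have h := lintegral_add_right_eq_self (μ := volume) (fun x => w x * og (x - s)) s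
          simp only [add_sub_cancel_right] at h
          exact h.symm
      _ ≤ ∫⁻ s, (c₁ * In + c₂ * w s * A ^ (n+1)) * oφ s := by
          refine lintegral_mono fun s => ?_
          refine mul_le_mul_left ?_ (oφ s)
          calc ∫⁻ u, w (u + s) * og u
              ≤ ∫⁻ u, (c₁ * w u + c₂ * w s) * og u :=
                lintegral_mono fun u => mul_le_mul_left (hpw u s) _
            _ = c₁ * In + c₂ * w s * A ^ (n+1) := by
                rw [show (fun u => (c₁ * w u + c₂ * w s) * og u)
                    = fun u => c₁ * (w u * og u) + (c₂ * w s) * og u from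
                  funext fun u => by ring]
                rw [lintegral_add_left (f := fun u => c₁ * (w u * og u)) ((hwm.mul hogm).const_mul c₁),
                  lintegral_const_mul _ (f := fun u => w u * og u) (hwm.mul hogm), lintegral_const_mul _ hogm, hgA, ← hIn]
      _ = c₁ * In * A + c₂ * A ^ (n+1) * B := by
          rw [show (fun s => (c₁ * In + c₂ * w s * A ^ (n+1)) * oφ s)
              = fun s => (c₁ * In) * oφ s + (c₂ * A ^ (n+1)) * (w s * oφ s) from
            funext fun s => by ring]
          rw [lintegral_add_left (hoφm.const_mul _), lintegral_const_mul _ hoφm,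
            lintegral_const_mul _ (f := fun s => w s * oφ s) (hwm.mul hoφm), ← hA, ← hB]
      _ ≤ c₁ * (N ^ q * A ^ n * B) * A + c₂ * A ^ (n+1) * B := by
          gcongr
      _ = (c₁ * N ^ q + c₂) * (A ^ (n+1) * B) := by ring
      _ = (N + 1) ^ q * (A ^ (n+1) * B) := by rw [hc₁, hc₂, combine hq N hN0 hNt]
      _ = (((n + 1 : ℕ) : ℝ≥0∞) + 1) ^ q * A ^ (n+1) * B := by
          rw [hNdef]
          push_cast
          try ring

end Stmt12Aux

open Stmt12Aux

/-- if `Λ = ∫₀^∞ φ ∈ (0,∞)` and `∫₀^∞ s^q φ(s) ds < ∞` for some `q ≥ 1`,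
then for some `C > 0`, for all `n ≥ 1` and `r ≥ 1`,
`∫_r^∞ √s·φ^{*n}(s) ds ≤ C·Λⁿ·n^q·r^{1/2−q}`. -/
theorem stmt_12 (φ : ℝ → ℝ) (q : ℝ) (hq : 1 ≤ q)
    (hmeas : Measurable φ) (hnonneg : ∀ s, 0 ≤ φ s) (hzero : ∀ s < (0 : ℝ), φ s = 0)
    (hint : Integrable φ)
    (Λ : ℝ) (hΛdef : Λ = ∫ s in Set.Ioi (0 : ℝ), φ s) (hΛpos : 0 < Λ)
    (hmom : IntegrableOn (fun s => s ^ q * φ s) (Set.Ioi (0 : ℝ))) :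
    ∃ C > 0, ∀ n : ℕ, 1 ≤ n → ∀ r : ℝ, 1 ≤ r →
      (∫ s in Set.Ioi r, Real.sqrt s * convPow φ n s)
        ≤ C * Λ ^ n * (n : ℝ) ^ q * r ^ ((1 : ℝ) / 2 - q) := by
  have hq0 : (0:ℝ) ≤ q := le_trans zero_le_one hq
  have hqpos : (0:ℝ) < q := lt_of_lt_of_le one_pos hq
  set A : ℝ≥0∞ := ∫⁻ s, ENNReal.ofReal (φ s) with hAdef
  set B : ℝ≥0∞ := ∫⁻ s, (ENNReal.ofReal s) ^ q * ENNReal.ofReal (φ s) with hBdef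
  -- A = ofReal Λ
  have hIoiA : A = ∫⁻ s in Set.Ioi 0, ENNReal.ofReal (φ s) :=
    lint_Ioi fun s hs => by rw [hzero s hs]; simp
  have hAfin : (∫⁻ s in Set.Ioi 0, ENNReal.ofReal (φ s)) < ⊤ :=
    (hint.integrableOn (s := Set.Ioi 0)).lintegral_lt_top
  have hΛeq : Λ = (∫⁻ s in Set.Ioi 0, ENNReal.ofReal (φ s)).toReal := by
    rw [hΛdef, integral_eq_lintegral_of_nonneg_ae
      (Filter.Eventually.of_forall fun s => hnonneg s) hmeas.aestronglyMeasurable]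
  have hA : A = ENNReal.ofReal Λ := by
    rw [hΛeq, ENNReal.ofReal_toReal hAfin.ne, hIoiA]
  have hAt : A ≠ ⊤ := by rw [hA]; exact ENNReal.ofReal_ne_top
  -- B is finite
  have hw0 : ∀ s : ℝ, s < 0 → (ENNReal.ofReal s) ^ q * ENNReal.ofReal (φ s) = 0 := by
    intro s hs
    rw [ENNReal.ofReal_eq_zero.2 hs.le, ENNReal.zero_rpow_of_pos hqpos, zero_mul]
  have hBIoi : B = ∫⁻ s in Set.Ioi 0, (ENNReal.ofReal s) ^ q * ENNReal.ofReal (φ s) :=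
    lint_Ioi hw0
  have hBt : B ≠ ⊤ := by
    rw [hBIoi]
    have : (∫⁻ s in Set.Ioi 0, (ENNReal.ofReal s) ^ q * ENNReal.ofReal (φ s))
        = ∫⁻ s in Set.Ioi 0, ENNReal.ofReal (s ^ q * φ s) := by
      refine setLIntegral_congr_fun measurableSet_Ioi ?_
      intro s hs
      dsimp only
      rw [ENNReal.ofReal_mul (Real.rpow_nonneg (le_of_lt hs) q),
        ENNReal.ofReal_rpow_of_pos hs]
    rw [this]
    exact hmom.lintegral_lt_top.ne
  -- the constant
  refine ⟨(B.toReal + 1) / Λ, by positivity, ?_⟩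
  intro n hn r hr
  obtain ⟨m, rfl⟩ : ∃ m, n = m + 1 := ⟨n - 1, by omega⟩
  obtain ⟨hcm, hc0, hcz, hlintA, hmomB⟩ :=
    main_induction φ q hq hmeas hnonneg hzero A B hAdef hAt hBdef m
  set G := convPow φ (m + 1) with hG
  have hrpos : (0:ℝ) < r := lt_of_lt_of_le one_pos hr
  set rp : ℝ := r ^ ((1:ℝ)/2 - q) with hrp
  have hrpnn : 0 ≤ rp := Real.rpow_nonneg hrpos.le _
  -- pass to lintegral
  have heq : (∫ s in Set.Ioi r, Real.sqrt s * G s)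
      = (∫⁻ s in Set.Ioi r, ENNReal.ofReal (Real.sqrt s * G s)).toReal := by
    rw [integral_eq_lintegral_of_nonneg_ae
      (Filter.Eventually.of_forall fun s => mul_nonneg (Real.sqrt_nonneg s) (hc0 s))
      (Real.continuous_sqrt.measurable.mul hcm).aestronglyMeasurable]
  have hkey : (∫⁻ s in Set.Ioi r, ENNReal.ofReal (Real.sqrt s * G s))
      ≤ ENNReal.ofReal rp * (((m : ℝ≥0∞) + 1) ^ q * A ^ m * B) := by
    calc (∫⁻ s in Set.Ioi r, ENNReal.ofReal (Real.sqrt s * G s))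
        ≤ ∫⁻ s in Set.Ioi r,
            ENNReal.ofReal rp * ((ENNReal.ofReal s) ^ q * ENNReal.ofReal (G s)) := by
          refine setLIntegral_mono
            (((ENNReal.continuous_rpow_const.measurable.comp ENNReal.measurable_ofReal).mul
              (ENNReal.measurable_ofReal.comp hcm)).const_mul _) ?_
          intro s hs
          have hs1 : (1:ℝ) ≤ s := le_trans hr (le_of_lt hs)
          have hspos : (0:ℝ) < s := lt_of_lt_of_le one_pos hs1
          have hreal : Real.sqrt s * G s ≤ rp * (s ^ q * G s) := by
            have h1 : Real.sqrt s ≤ rp * s ^ q := by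
              rw [Real.sqrt_eq_rpow]
              calc s ^ ((1:ℝ)/2) = s ^ q * s ^ ((1:ℝ)/2 - q) := by
                    rw [← Real.rpow_add hspos]; ring_nf
                _ ≤ s ^ q * rp := by
                    refine mul_le_mul_of_nonneg_left ?_ (Real.rpow_nonneg hspos.le q)
                    exact Real.rpow_le_rpow_of_nonpos hrpos (le_of_lt hs) (by linarith)
                _ = rp * s ^ q := mul_comm _ _
            calc Real.sqrt s * G s ≤ (rp * s ^ q) * G s :=
                  mul_le_mul_of_nonneg_right h1 (hc0 s)
              _ = rp * (s ^ q * G s) := by ring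
          calc ENNReal.ofReal (Real.sqrt s * G s) ≤ ENNReal.ofReal (rp * (s ^ q * G s)) :=
                ENNReal.ofReal_le_ofReal hreal
            _ = ENNReal.ofReal rp * ((ENNReal.ofReal s) ^ q * ENNReal.ofReal (G s)) := by
                rw [ENNReal.ofReal_mul hrpnn,
                  ENNReal.ofReal_mul (Real.rpow_nonneg hspos.le q),
                  ENNReal.ofReal_rpow_of_pos hspos]
      _ = ENNReal.ofReal rp
            * ∫⁻ s in Set.Ioi r, (ENNReal.ofReal s) ^ q * ENNReal.ofReal (G s) :=
          lintegral_const_mul _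
            ((ENNReal.continuous_rpow_const.measurable.comp ENNReal.measurable_ofReal).mul
              (ENNReal.measurable_ofReal.comp hcm))
      _ ≤ ENNReal.ofReal rp * ∫⁻ s, (ENNReal.ofReal s) ^ q * ENNReal.ofReal (G s) :=
          mul_le_mul_right (setLIntegral_le_lintegral _ _) _
      _ ≤ ENNReal.ofReal rp * (((m : ℝ≥0∞) + 1) ^ q * A ^ m * B) :=
          mul_le_mul_right hmomB _
  have hRfin : ENNReal.ofReal rp * (((m : ℝ≥0∞) + 1) ^ q * A ^ m * B) ≠ ⊤ := by
    refine ENNReal.mul_ne_top ENNReal.ofReal_ne_top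
      (ENNReal.mul_ne_top (ENNReal.mul_ne_top ?_ ?_) hBt)
    · exact ENNReal.rpow_ne_top_of_nonneg hq0
        (ENNReal.add_ne_top.2 ⟨ENNReal.natCast_ne_top m, ENNReal.one_ne_top⟩)
    · exact ENNReal.pow_ne_top hAt
  have htr : (ENNReal.ofReal rp * (((m : ℝ≥0∞) + 1) ^ q * A ^ m * B)).toReal
      = rp * (((m:ℝ) + 1) ^ q * Λ ^ m * B.toReal) := by
    rw [ENNReal.toReal_mul, ENNReal.toReal_mul, ENNReal.toReal_mul,
      ENNReal.toReal_ofReal hrpnn, ENNReal.toReal_pow, hA, ENNReal.toReal_ofReal hΛpos.le]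
    have hone : (((m : ℝ≥0∞) + 1) ^ q).toReal = ((m:ℝ) + 1) ^ q := by
      rw [← ENNReal.toReal_rpow]
      congr 1
    rw [hone]
  rw [heq]
  refine le_trans (ENNReal.toReal_mono hRfin hkey) ?_
  rw [htr]
  -- final real arithmetic
  have hΛpow : (0:ℝ) < Λ ^ m := pow_pos hΛpos m
  have hcast : ((m + 1 : ℕ) : ℝ) = (m:ℝ) + 1 := by push_cast; ring
  have hfin : (B.toReal + 1) / Λ * Λ ^ (m + 1) = (B.toReal + 1) * Λ ^ m := by
    field_simp
    ring
  rw [hcast, hfin]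
  have hBnn : 0 ≤ B.toReal := ENNReal.toReal_nonneg
  have hpowq : 0 ≤ ((m:ℝ) + 1) ^ q := Real.rpow_nonneg (by positivity) q
  nlinarith [mul_nonneg (mul_nonneg hpowq hΛpow.le) hrpnn,
    mul_nonneg hpowq hΛpow.le]
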